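/- Let T be an orthogonal trajectory with n edges and fix a side length s > 0. Then max( sup_{j ∈ {0,…,n}, x ∈ ℝ} w_T(x, (p_j).2 − s), sup_{j ∈ {0,…,n}, y ∈ ℝ} w_T((p_j).1 − s, y) ) ≥ h(T)/2; that is, among the squares whose upper side has the y-coordinate of a vertex of T or whose right side has the x-coordinate of a vertex of T, the supremum of the weights is at least half the weight of a hotspot. -/

import Mathlib

open MeasureTheory Set
open scoped ENNReal

/-- `Square s x y` is the axis-parallel square `[x, x+s] × [y, y+s]`. -/
def Square (s x y : ℝ) : Set (ℝ × ℝ) := Icc x (x + s) ×ˢ Icc y (y + s)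

/-- The weight of `Square s x y` with respect to a trajectory `T` on `[t0, tn]`:
the Lebesgue measure of `{t ∈ [t0, tn] : T t ∈ Square s x y}`. -/
noncomputable def wgt (s t0 tn : ℝ) (T : ℝ → ℝ × ℝ) (x y : ℝ) : ℝ≥0∞ :=
  volume {τ ∈ Icc t0 tn | T τ ∈ Square s x y}

lemma exists_edge {n : ℕ} (hn : 0 < n) {t : Fin (n + 1) → ℝ} (ht : Monotone t)
    {τ : ℝ} (h0 : t 0 ≤ τ) (h1 : τ ≤ t (Fin.last n)) :
    ∃ i : Fin n, τ ∈ Icc (t i.castSucc) (t i.succ) := by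
  classical
  set K : Finset (Fin (n + 1)) := Finset.univ.filter (fun k => t k ≤ τ) with hK
  have h0K : (0 : Fin (n + 1)) ∈ K := by simp [hK, h0]
  have hKne : K.Nonempty := ⟨0, h0K⟩
  set k := K.max' hKne with hk
  have hkK : k ∈ K := K.max'_mem hKne
  have hkτ : t k ≤ τ := by simpa [hK] using hkK
  by_cases hlt : (k : ℕ) < n
  · refine ⟨⟨(k : ℕ), hlt⟩, ?_, ?_⟩
    · have : (⟨(k : ℕ), hlt⟩ : Fin n).castSucc = k := by
        apply Fin.ext; simp
      rw [this]; exact hkτ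
    · by_contra h
      push_neg at h
      have hmem : (⟨(k : ℕ), hlt⟩ : Fin n).succ ∈ K := by
        simp [hK]; exact h.le
      have := K.le_max' _ hmem
      rw [← hk] at this
      simp [Fin.le_def] at this
  · have hkn : (k : ℕ) = n := by have := k.isLt; omega
    have hkl : k = Fin.last n := Fin.ext (by simp [Fin.last, hkn])
    have hτeq : τ = t (Fin.last n) := le_antisymm h1 (by rw [← hkl]; exact hkτ)
    refine ⟨⟨n - 1, by omega⟩, ?_, ?_⟩
    · have : t (⟨n - 1, by omega⟩ : Fin n).castSucc ≤ t (Fin.last n) :=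
        ht (by simp [Fin.le_def]; try omega)
      exact this.trans_eq hτeq.symm
    · have : (⟨n - 1, by omega⟩ : Fin n).succ = Fin.last n := by
        apply Fin.ext; simp [Fin.last]; try omega
      rw [this, hτeq]

theorem tracked_squares_half_hotspot
    (n : ℕ) (s : ℝ) (hs : 0 < s)
    (t : Fin (n + 1) → ℝ) (ht : StrictMono t)
    (p : Fin (n + 1) → ℝ × ℝ)
    (T : ℝ → ℝ × ℝ)
    (hT : ∀ i : Fin n, ∀ τ ∈ Icc (t i.castSucc) (t i.succ),
      T τ = p i.castSucc +
        ((τ - t i.castSucc) / (t i.succ - t i.castSucc)) • (p i.succ - p i.castSucc))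
    (horth : ∀ i : Fin n,
      (p i.castSucc).1 = (p i.succ).1 ∨ (p i.castSucc).2 = (p i.succ).2) :
    max
      (⨆ j : Fin (n + 1), ⨆ x : ℝ,
        wgt s (t 0) (t (Fin.last n)) T x ((p j).2 - s))
      (⨆ j : Fin (n + 1), ⨆ y : ℝ,
        wgt s (t 0) (t (Fin.last n)) T ((p j).1 - s) y) ≥
      (⨆ q : ℝ × ℝ, wgt s (t 0) (t (Fin.last n)) T q.1 q.2) / 2 := by
  classical
  set L1 := ⨆ j : Fin (n + 1), ⨆ x : ℝ,
      wgt s (t 0) (t (Fin.last n)) T x ((p j).2 - s) with hL1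
  set L2 := ⨆ j : Fin (n + 1), ⨆ y : ℝ,
      wgt s (t 0) (t (Fin.last n)) T ((p j).1 - s) y with hL2
  rw [ge_iff_le, ENNReal.iSup_div]
  refine iSup_le ?_
  rintro ⟨x, y⟩
  refine ENNReal.div_le_of_le_mul ?_
  rcases Nat.eq_zero_or_pos n with hn | hn
  · subst hn
    have hA0 : wgt s (t 0) (t (Fin.last 0)) T x y = 0 := by
      have hsub : {τ ∈ Icc (t 0) (t (Fin.last 0)) | T τ ∈ Square s x y} ⊆ {t 0} := by
        intro τ hτ
        have h1 := hτ.1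
        have : Fin.last 0 = 0 := rfl
        rw [this] at h1
        exact le_antisymm h1.2 h1.1
      refine le_antisymm ?_ zero_le
      calc volume {τ ∈ Icc (t 0) (t (Fin.last 0)) | T τ ∈ Square s x y}
          ≤ volume ({t 0} : Set ℝ) := measure_mono hsub
        _ = 0 := measure_singleton _
    simp only [show Fin.last 0 = (0 : Fin 1) from rfl] at hA0
    simp [hA0]
  -- main case
  set A : Set ℝ := {τ ∈ Icc (t 0) (t (Fin.last n)) | T τ ∈ Square s x y} with hA
  set HU : Set ℝ := ⋃ (i : Fin n) (_ : (p i.castSucc).2 = (p i.succ).2),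
      (A ∩ Icc (t i.castSucc) (t i.succ)) with hHUdef
  set VU : Set ℝ := ⋃ (i : Fin n) (_ : (p i.castSucc).1 = (p i.succ).1),
      (A ∩ Icc (t i.castSucc) (t i.succ)) with hVUdef
  have hcover : A ⊆ HU ∪ VU := by
    intro τ hτ
    obtain ⟨i, hi⟩ := exists_edge hn ht.monotone hτ.1.1 hτ.1.2
    rcases horth i with h | h
    · exact Or.inr (mem_iUnion₂.mpr ⟨i, h, hτ, hi⟩)
    · exact Or.inl (mem_iUnion₂.mpr ⟨i, h, hτ, hi⟩)
  -- second coordinate is constant on horizontal edges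
  have keyH : ∀ i : Fin n, (p i.castSucc).2 = (p i.succ).2 →
      ∀ τ ∈ Icc (t i.castSucc) (t i.succ), (T τ).2 = (p i.castSucc).2 := by
    intro i hi τ hτ
    rw [hT i τ hτ]
    simp only [Prod.snd_add, Prod.smul_snd, Prod.snd_sub, smul_eq_mul]
    rw [← hi, sub_self, mul_zero, add_zero]
  have keyV : ∀ i : Fin n, (p i.castSucc).1 = (p i.succ).1 →
      ∀ τ ∈ Icc (t i.castSucc) (t i.succ), (T τ).1 = (p i.castSucc).1 := by
    intro i hi τ hτ
    rw [hT i τ hτ]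
    simp only [Prod.fst_add, Prod.smul_fst, Prod.fst_sub, smul_eq_mul]
    rw [← hi, sub_self, mul_zero, add_zero]
  have hHU : volume HU ≤ L1 := by
    rcases eq_empty_or_nonempty HU with h | ⟨τ₀, hτ₀⟩
    · simp [h]
    · obtain ⟨i₀', hhi₀', hτ₀A, hτ₀I⟩ :
          ∃ i : Fin n, (p i.castSucc).2 = (p i.succ).2 ∧ τ₀ ∈ A ∧
            τ₀ ∈ Icc (t i.castSucc) (t i.succ) := by
        obtain ⟨i, hi, h1, h2⟩ := mem_iUnion₂.mp hτ₀
        exact ⟨i, hi, h1, h2⟩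
      set S : Finset (Fin n) := Finset.univ.filter
        (fun i => (p i.castSucc).2 = (p i.succ).2 ∧
          (A ∩ Icc (t i.castSucc) (t i.succ)).Nonempty) with hSdef
      have hSne : S.Nonempty := ⟨i₀', by
        simp only [hSdef, Finset.mem_filter, Finset.mem_univ, true_and]
        exact ⟨hhi₀', τ₀, hτ₀A, hτ₀I⟩⟩
      obtain ⟨i₀, hi₀S, hmax⟩ := S.exists_max_image (fun i => (p i.castSucc).2) hSne
      set c := (p i₀.castSucc).2 with hc
      obtain ⟨hhi₀, τ₁, hτ₁A, hτ₁I⟩ :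
          (p i₀.castSucc).2 = (p i₀.succ).2 ∧
            ∃ τ₁, τ₁ ∈ A ∧ τ₁ ∈ Icc (t i₀.castSucc) (t i₀.succ) := by
        have := hi₀S
        simp only [hSdef, Finset.mem_filter, Finset.mem_univ, true_and] at this
        exact ⟨this.1, this.2⟩
      have hcy : y ≤ c ∧ c ≤ y + s := by
        have h2 := hτ₁A.2.2
        rw [keyH i₀ hhi₀ τ₁ hτ₁I] at h2
        exact ⟨h2.1, h2.2⟩
      have hsub : HU ⊆ {τ ∈ Icc (t 0) (t (Fin.last n)) | T τ ∈ Square s x (c - s)} := by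
        intro τ hτ
        obtain ⟨i, hhi, hτA, hτI⟩ := mem_iUnion₂.mp hτ
        have hd := keyH i hhi τ hτI
        have hiS : i ∈ S := by
          simp only [hSdef, Finset.mem_filter, Finset.mem_univ, true_and]
          exact ⟨hhi, τ, hτA, hτI⟩
        have hdc : (p i.castSucc).2 ≤ c := hmax i hiS
        have hdy : y ≤ (p i.castSucc).2 ∧ (p i.castSucc).2 ≤ y + s := by
          have h2 := hτA.2.2
          rw [hd] at h2
          exact ⟨h2.1, h2.2⟩
        refine ⟨hτA.1, ?_, ?_⟩
        · exact hτA.2.1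
        · rw [hd]
          constructor
          · linarith [hcy.2, hdy.1]
          · rw [sub_add_cancel]; exact hdc
      calc volume HU ≤ wgt s (t 0) (t (Fin.last n)) T x (c - s) := measure_mono hsub
        _ ≤ L1 := by
            rw [hL1]
            exact le_iSup_of_le i₀.castSucc (le_iSup_of_le x le_rfl)
  have hVU : volume VU ≤ L2 := by
    rcases eq_empty_or_nonempty VU with h | ⟨τ₀, hτ₀⟩
    · simp [h]
    · obtain ⟨i₀', hhi₀', hτ₀A, hτ₀I⟩ :
          ∃ i : Fin n, (p i.castSucc).1 = (p i.succ).1 ∧ τ₀ ∈ A ∧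
            τ₀ ∈ Icc (t i.castSucc) (t i.succ) := by
        obtain ⟨i, hi, h1, h2⟩ := mem_iUnion₂.mp hτ₀
        exact ⟨i, hi, h1, h2⟩
      set S : Finset (Fin n) := Finset.univ.filter
        (fun i => (p i.castSucc).1 = (p i.succ).1 ∧
          (A ∩ Icc (t i.castSucc) (t i.succ)).Nonempty) with hSdef
      have hSne : S.Nonempty := ⟨i₀', by
        simp only [hSdef, Finset.mem_filter, Finset.mem_univ, true_and]
        exact ⟨hhi₀', τ₀, hτ₀A, hτ₀I⟩⟩
      obtain ⟨i₀, hi₀S, hmax⟩ := S.exists_max_image (fun i => (p i.castSucc).1) hSne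
      set c := (p i₀.castSucc).1 with hc
      obtain ⟨hhi₀, τ₁, hτ₁A, hτ₁I⟩ :
          (p i₀.castSucc).1 = (p i₀.succ).1 ∧
            ∃ τ₁, τ₁ ∈ A ∧ τ₁ ∈ Icc (t i₀.castSucc) (t i₀.succ) := by
        have := hi₀S
        simp only [hSdef, Finset.mem_filter, Finset.mem_univ, true_and] at this
        exact ⟨this.1, this.2⟩
      have hcx : x ≤ c ∧ c ≤ x + s := by
        have h2 := hτ₁A.2.1
        rw [keyV i₀ hhi₀ τ₁ hτ₁I] at h2
        exact ⟨h2.1, h2.2⟩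
      have hsub : VU ⊆ {τ ∈ Icc (t 0) (t (Fin.last n)) | T τ ∈ Square s (c - s) y} := by
        intro τ hτ
        obtain ⟨i, hhi, hτA, hτI⟩ := mem_iUnion₂.mp hτ
        have hd := keyV i hhi τ hτI
        have hiS : i ∈ S := by
          simp only [hSdef, Finset.mem_filter, Finset.mem_univ, true_and]
          exact ⟨hhi, τ, hτA, hτI⟩
        have hdc : (p i.castSucc).1 ≤ c := hmax i hiS
        have hdx : x ≤ (p i.castSucc).1 ∧ (p i.castSucc).1 ≤ x + s := by
          have h2 := hτA.2.1
          rw [hd] at h2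
          exact ⟨h2.1, h2.2⟩
        refine ⟨hτA.1, ?_, ?_⟩
        · rw [hd]
          constructor
          · linarith [hcx.2, hdx.1]
          · rw [sub_add_cancel]; exact hdc
        · exact hτA.2.2
      calc volume VU ≤ wgt s (t 0) (t (Fin.last n)) T (c - s) y := measure_mono hsub
        _ ≤ L2 := by
            rw [hL2]
            exact le_iSup_of_le i₀.castSucc (le_iSup_of_le y le_rfl)
  calc wgt s (t 0) (t (Fin.last n)) T x y
      = volume A := rfl
    _ ≤ volume (HU ∪ VU) := measure_mono hcover
    _ ≤ volume HU + volume VU := measure_union_le _ _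
    _ ≤ L1 + L2 := add_le_add hHU hVU
    _ ≤ max L1 L2 + max L1 L2 := add_le_add (le_max_left _ _) (le_max_right _ _)
    _ = max L1 L2 * 2 := (mul_two _).symm
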